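/- Let Ω be a nonempty finite set, F a partition of Ω, μ a strictly positive probability distribution on Ω, and μ_1,…,μ_k probability distributions on Ω such that for each i there exist an F-measurable signaling function τ_i and a signal s_i with Σ_ω μ(ω)τ_i(s_i|ω) > 0 and μ_{τ_i}(·|s_i) = μ_i. Then there exists an F-measurable signaling function τ such that the set of posteriors generated by τ with positive probability, {μ_τ(·|s) : Σ_ω μ(ω)τ(s|ω) > 0}, coincides exactly with {μ_1,…,μ_k}, if and only if the family {μ_1,…,μ_k} strictly preserves positivity (SPP) with respect to μ. -/

import Mathlib

open Finset

/-- Strictly preserves positivity (SPP). -/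
def SPP {Ω : Type} [Fintype Ω] {k : ℕ} (ν : Fin k → Ω → ℝ) (μ : Ω → ℝ) : Prop :=
  ∀ u : Ω → ℝ, (∑ ω, μ ω * u ω) = 0 → (∀ i, 0 ≤ ∑ ω, ν i ω * u ω) →
    ∀ i, (∑ ω, ν i ω * u ω) = 0

lemma exists_pos_combo {Ω : Type} [Fintype Ω] {k : ℕ} (hk : 0 < k)
    (μ : Ω → ℝ) (hμpos : ∀ ω, 0 < μ ω) (hμsum : (∑ ω, μ ω) = 1)
    (ν : Fin k → Ω → ℝ) (hν : ∀ i, (∀ ω, 0 ≤ ν i ω) ∧ ((∑ ω, ν i ω) = 1))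
    (hspp : SPP ν μ) :
    ∃ l : Fin k → ℝ, (∀ i, 0 < l i) ∧ ((∑ i, l i) = 1) ∧
      ∀ ω, (∑ i, l i * ν i ω) = μ ω := by
  classical
  -- the linear map u ↦ (∑ ω, ν i ω * u ω)_i
  set T : (Ω → ℝ) →ₗ[ℝ] (Fin k → ℝ) :=
    { toFun := fun u i => ∑ ω, ν i ω * u ω
      map_add' := by
        intro a b; funext i
        simp [mul_add, Finset.sum_add_distrib]
      map_smul' := by
        intro c a; funext i
        simp [Finset.mul_sum, mul_comm, mul_left_comm] } with hT
  set L : (Ω → ℝ) →ₗ[ℝ] ℝ :=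
    { toFun := fun u => ∑ ω, μ ω * u ω
      map_add' := by
        intro a b; simp [mul_add, Finset.sum_add_distrib]
      map_smul' := by
        intro c a; simp [Finset.mul_sum, mul_comm, mul_left_comm] } with hL
  set V : Submodule ℝ (Fin k → ℝ) := Submodule.map T (LinearMap.ker L) with hV
  have hVclosed : IsClosed (V : Set (Fin k → ℝ)) := Submodule.closed_of_finiteDimensional V
  have hdisj : Disjoint (V : Set (Fin k → ℝ)) (stdSimplex ℝ (Fin k)) := by
    rw [Set.disjoint_left]
    rintro x ⟨u, hu, rfl⟩ hmem
    have hu0 : (∑ ω, μ ω * u ω) = 0 := hu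
    have hzero : ∀ i, (∑ ω, ν i ω * u ω) = 0 :=
      hspp u hu0 (fun i => hmem.1 i)
    have h1 : (∑ i, T u i) = 1 := hmem.2
    have hzero' : ∀ i, T u i = 0 := hzero
    rw [Finset.sum_congr rfl (fun i _ => hzero' i)] at h1
    simpa using h1
  obtain ⟨f, a, b, hfV, hab, hfS⟩ :=
    geometric_hahn_banach_closed_compact (V.convex) hVclosed
      (convex_stdSimplex ℝ (Fin k)) (isCompact_stdSimplex ℝ (Fin k)) hdisj
  -- f vanishes on V
  have hfV0 : ∀ x ∈ V, f x = 0 := by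
    intro x hx
    by_contra h
    have ht : ∀ t : ℝ, t * f x < a := by
      intro t
      have := hfV (t • x) (V.smul_mem t hx)
      simpa [smul_eq_mul] using this
    have h1 := ht ((a + 1) / f x)
    rw [div_mul_cancel₀ _ h] at h1
    linarith
  have ha0 : 0 < a := by
    have := hfV 0 V.zero_mem
    simpa using this
  set y : Fin k → ℝ := fun i => f (Pi.single i 1) with hy
  have hypos : ∀ i, 0 < y i := by
    intro i
    have := hfS _ (single_mem_stdSimplex ℝ i)
    linarith
  have hfx : ∀ x : Fin k → ℝ, f x = ∑ i, x i * y i := by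
    intro x
    conv_lhs => rw [← Finset.univ_sum_single x]
    rw [map_sum]
    refine Finset.sum_congr rfl (fun i _ => ?_)
    have hsingle : Pi.single i (x i) = x i • (Pi.single i 1 : Fin k → ℝ) := by
      rw [← Pi.single_smul]; simp
    rw [hsingle, map_smul]
    simp [smul_eq_mul, hy]
  set c : ℝ := ∑ i, y i with hc
  have hcpos : 0 < c := by
    have : Nonempty (Fin k) := Fin.pos_iff_nonempty.mp hk
    exact Finset.sum_pos (fun i _ => hypos i) Finset.univ_nonempty
  have hkey : ∀ ω, (∑ i, y i * ν i ω) = c * μ ω := by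
    intro ω
    set u : Ω → ℝ := fun ω' => (if ω' = ω then (μ ω)⁻¹ else 0) - 1 with hu
    have hμne : μ ω ≠ 0 := (hμpos ω).ne'
    have hu0 : (∑ ω', μ ω' * u ω') = 0 := by
      simp only [hu, mul_sub, Finset.sum_sub_distrib, mul_ite, mul_zero, mul_one]
      rw [Finset.sum_ite_eq' Finset.univ ω (fun ω' => μ ω' * (μ ω)⁻¹)]
      simp [hμne, hμsum]
    have hTu : ∀ i, T u i = ν i ω * (μ ω)⁻¹ - 1 := by
      intro i
      simp only [hT, LinearMap.coe_mk, AddHom.coe_mk, hu, mul_sub, Finset.sum_sub_distrib,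
        mul_ite, mul_zero, mul_one]
      rw [Finset.sum_ite_eq' Finset.univ ω (fun ω' => ν i ω' * (μ ω)⁻¹)]
      simp [(hν i).2]
    have hmem : T u ∈ V := ⟨u, hu0, rfl⟩
    have h0 := hfV0 _ hmem
    rw [hfx] at h0
    have h1 : (∑ i, (ν i ω * (μ ω)⁻¹ - 1) * y i) = 0 := by
      rw [← h0]
      exact Finset.sum_congr rfl (fun i _ => by rw [hTu i])
    have h2 : (∑ i, (ν i ω * (μ ω)⁻¹ - 1) * y i)
        = (μ ω)⁻¹ * (∑ i, y i * ν i ω) - c := by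
      rw [Finset.mul_sum, hc, ← Finset.sum_sub_distrib]
      exact Finset.sum_congr rfl (fun i _ => by ring)
    rw [h2] at h1
    have : (∑ i, y i * ν i ω) = c * μ ω := by
      field_simp at h1
      linarith [h1]
    exact this
  refine ⟨fun i => y i / c, fun i => div_pos (hypos i) hcpos, ?_, ?_⟩
  · rw [← Finset.sum_div]
    field_simp
    exact hc.symm
  · intro ω
    have h3 : (∑ i, y i / c * ν i ω) = (∑ i, y i * ν i ω) / c := by
      rw [Finset.sum_div]
      exact Finset.sum_congr rfl (fun i _ => by ring)
    rw [h3, hkey ω, mul_comm, mul_div_assoc, div_self hcpos.ne', mul_one]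


/-- Theorem 2, part (ii): given that each `μ_i` is induced by some
F-measurable signaling function and signal, there exists an F-measurable
signaling function whose set of positive-probability posteriors coincides
exactly with `{μ_1,…,μ_k}` iff the family `{μ_1,…,μ_k}` strictly preserves
positivity w.r.t. `μ`. -/
theorem stmt_14 {Ω : Type} [Fintype Ω] [Nonempty Ω]
    (F : Ω → Ω → Prop) (hF : Equivalence F)
    (μ : Ω → ℝ) (hμpos : ∀ ω, 0 < μ ω) (hμsum : (∑ ω, μ ω) = 1)
    {k : ℕ} (hk : 0 < k) (ν : Fin k → Ω → ℝ)
    (hν : ∀ i, (∀ ω, 0 ≤ ν i ω) ∧ ((∑ ω, ν i ω) = 1))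
    (hgen : ∀ i, ∃ (S : Type) (_ : Fintype S) (τ : Ω → S → ℝ) (s : S),
      (∀ ω s', 0 ≤ τ ω s') ∧ (∀ ω, (∑ s', τ ω s') = 1) ∧
      (∀ ω ω', F ω ω' → ∀ s', τ ω s' = τ ω' s') ∧
      (0 < (∑ ω, μ ω * τ ω s)) ∧
      (∀ ω, ν i ω = μ ω * τ ω s / (∑ ω', μ ω' * τ ω' s))) :
    (∃ (S : Type) (_ : Fintype S) (τ : Ω → S → ℝ),
      (∀ ω s, 0 ≤ τ ω s) ∧ (∀ ω, (∑ s, τ ω s) = 1) ∧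
      (∀ ω ω', F ω ω' → ∀ s, τ ω s = τ ω' s) ∧
      (∀ s, 0 < (∑ ω, μ ω * τ ω s) →
        ∃ i, ∀ ω, μ ω * τ ω s / (∑ ω', μ ω' * τ ω' s) = ν i ω) ∧
      (∀ i, ∃ s, 0 < (∑ ω, μ ω * τ ω s) ∧
        ∀ ω, μ ω * τ ω s / (∑ ω', μ ω' * τ ω' s) = ν i ω)) ↔
    SPP ν μ := by
  classical
  constructor
  · rintro ⟨S, _inst, τ, h1, h2, h3, h4, h5⟩
    intro u hu0 hui i
    -- each signal's contribution is nonnegative and they sum to 0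
    have sumg : (∑ s, ∑ ω, μ ω * τ ω s * u ω) = 0 := by
      rw [Finset.sum_comm]
      have : ∀ ω, (∑ s, μ ω * τ ω s * u ω) = μ ω * u ω := by
        intro ω
        rw [← Finset.sum_mul, ← Finset.mul_sum, h2 ω, mul_one]
      rw [Finset.sum_congr rfl (fun ω _ => this ω), hu0]
    have nonneg : ∀ s : S, 0 ≤ ∑ ω, μ ω * τ ω s * u ω := by
      intro s
      by_cases hZ : 0 < (∑ ω, μ ω * τ ω s)
      · obtain ⟨j, hj⟩ := h4 s hZ
        have heach : ∀ ω, μ ω * τ ω s = (∑ ω', μ ω' * τ ω' s) * ν j ω := by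
          intro ω
          rw [← hj ω]
          field_simp
        calc (0:ℝ) ≤ (∑ ω', μ ω' * τ ω' s) * ∑ ω, ν j ω * u ω :=
              mul_nonneg hZ.le (hui j)
        _ = ∑ ω, μ ω * τ ω s * u ω := by
            rw [Finset.mul_sum]
            exact Finset.sum_congr rfl fun ω _ => by rw [heach ω]; ring
      · have hnn : ∀ ω ∈ Finset.univ, 0 ≤ μ ω * τ ω s :=
          fun ω _ => mul_nonneg (hμpos ω).le (h1 ω s)
        have hZ0 : (∑ ω, μ ω * τ ω s) = 0 :=
          le_antisymm (not_lt.mp hZ) (Finset.sum_nonneg hnn)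
        have hterm := (Finset.sum_eq_zero_iff_of_nonneg hnn).mp hZ0
        have : (∑ ω, μ ω * τ ω s * u ω) = 0 :=
          Finset.sum_eq_zero fun ω hω => by rw [hterm ω hω, zero_mul]
        exact this.ge
    have hall := (Finset.sum_eq_zero_iff_of_nonneg (fun s _ => nonneg s)).mp sumg
    obtain ⟨s, hZ, hpost⟩ := h5 i
    have : (∑ ω, ν i ω * u ω)
        = (∑ ω, μ ω * τ ω s * u ω) / (∑ ω', μ ω' * τ ω' s) := by
      rw [Finset.sum_div]
      refine Finset.sum_congr rfl fun ω _ => ?_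
      rw [← hpost ω]; ring
    rw [this, hall s (Finset.mem_univ s), zero_div]
  · intro hspp
    obtain ⟨l, hlpos, hlsum, hl⟩ := exists_pos_combo hk μ hμpos hμsum ν hν hspp
    have hmeas : ∀ (i : Fin k) ω ω', F ω ω' → ν i ω * μ ω' = ν i ω' * μ ω := by
      intro i ω ω' hωω'
      obtain ⟨S, _, τ0, s0, hτ0nn, hτ0sum, hτ0meas, hZ0, hpost0⟩ := hgen i
      rw [hpost0 ω, hpost0 ω', hτ0meas ω ω' hωω' s0]
      ring
    refine ⟨Fin k, inferInstance, fun ω i => l i * ν i ω / μ ω, ?_, ?_, ?_, ?_, ?_⟩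
    · intro ω s
      exact div_nonneg (mul_nonneg (hlpos s).le ((hν s).1 ω)) (hμpos ω).le
    · intro ω
      rw [← Finset.sum_div]
      have : (∑ i, l i * ν i ω) = μ ω := hl ω
      rw [this, div_self (hμpos ω).ne']
    · intro ω ω' hωω' s
      rw [div_eq_div_iff (hμpos ω).ne' (hμpos ω').ne', mul_assoc, mul_assoc,
        hmeas s ω ω' hωω']
    · intro s hs
      refine ⟨s, fun ω => ?_⟩
      have hμτ : ∀ ω', μ ω' * (l s * ν s ω' / μ ω') = l s * ν s ω' := by
        intro ω'
        rw [← mul_div_assoc]; exact mul_div_cancel_left₀ _ (hμpos ω').ne'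
      have hZ : (∑ ω', μ ω' * (l s * ν s ω' / μ ω')) = l s := by
        rw [Finset.sum_congr rfl (fun ω' _ => hμτ ω'), ← Finset.mul_sum, (hν s).2, mul_one]
      rw [hμτ ω, hZ, mul_comm, mul_div_assoc, div_self (hlpos s).ne', mul_one]
    · intro i
      have hμτ : ∀ ω', μ ω' * (l i * ν i ω' / μ ω') = l i * ν i ω' := by
        intro ω'
        rw [← mul_div_assoc]; exact mul_div_cancel_left₀ _ (hμpos ω').ne'
      have hZ : (∑ ω', μ ω' * (l i * ν i ω' / μ ω')) = l i := by
        rw [Finset.sum_congr rfl (fun ω' _ => hμτ ω'), ← Finset.mul_sum, (hν i).2, mul_one]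
      refine ⟨i, ?_, fun ω => ?_⟩
      · rw [hZ]; exact hlpos i
      · rw [hμτ ω, hZ, mul_comm, mul_div_assoc, div_self (hlpos i).ne', mul_one]
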